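/- Let F be a field, let ω be the standard symplectic form on V = F^{2d}, and let A : V → V be a symplectic linear map (ω(Au,Av) = ω(u,v) for all u,v) whose characteristic polynomial P has no repeated roots in an algebraic closure of F. Let p and q be monic irreducible factors of P over F, and set p*(X) = p(0)^{−1}·X^{deg p}·p(1/X), the normalized reciprocal polynomial of p (note p(0) ≠ 0 since A is invertible). If q ≠ p*, then ω(u,w) = 0 for all u ∈ ker p(A) and all w ∈ ker q(A). -/
import Mathlib


open scoped BigOperators

/-- The standard symplectic form `ω(m,n) = m₁·n₂ − m₂·n₁` on `F^{2d}`,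
with coordinates indexed by `Fin d ⊕ Fin d`. -/
def sympF {d : ℕ} {F : Type*} [Field F] (m n : (Fin d ⊕ Fin d) → F) : F :=
  (∑ i : Fin d, m (Sum.inl i) * n (Sum.inr i)) -
    (∑ i : Fin d, m (Sum.inr i) * n (Sum.inl i))

open Polynomial

section Aux

variable {d : ℕ} {F : Type*} [Field F]

lemma sympF_add_left (m m' n : (Fin d ⊕ Fin d) → F) :
    sympF (m + m') n = sympF m n + sympF m' n := by
  simp only [sympF, Pi.add_apply, add_mul, Finset.sum_add_distrib]; ring

lemma sympF_add_right (m n n' : (Fin d ⊕ Fin d) → F) :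
    sympF m (n + n') = sympF m n + sympF m n' := by
  simp only [sympF, Pi.add_apply, mul_add, Finset.sum_add_distrib]; ring

lemma sympF_smul_left (c : F) (m n : (Fin d ⊕ Fin d) → F) :
    sympF (c • m) n = c * sympF m n := by
  simp only [sympF, Pi.smul_apply, smul_eq_mul, mul_sub, Finset.mul_sum]
  congr 1 <;> exact Finset.sum_congr rfl (fun _ _ => by ring)

lemma sympF_smul_right (c : F) (m n : (Fin d ⊕ Fin d) → F) :
    sympF m (c • n) = c * sympF m n := by
  simp only [sympF, Pi.smul_apply, smul_eq_mul, mul_sub, Finset.mul_sum]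
  congr 1 <;> exact Finset.sum_congr rfl (fun _ _ => by ring)

/-- `sympF` as a bilinear map. -/
noncomputable def sympL : ((Fin d ⊕ Fin d) → F) →ₗ[F] ((Fin d ⊕ Fin d) → F) →ₗ[F] F :=
  LinearMap.mk₂ F sympF sympF_add_left sympF_smul_left sympF_add_right sympF_smul_right

lemma sympL_apply (m n : (Fin d ⊕ Fin d) → F) : sympL m n = sympF m n := rfl

variable (A : ((Fin d ⊕ Fin d) → F) →ₗ[F] ((Fin d ⊕ Fin d) → F))
variable (hA : ∀ u v : (Fin d ⊕ Fin d) → F, sympF (A u) (A v) = sympF u v)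

include hA

lemma sympF_pow (k : ℕ) (u v : (Fin d ⊕ Fin d) → F) :
    sympF ((A ^ k) u) ((A ^ k) v) = sympF u v := by
  induction k generalizing u v with
  | zero => simp
  | succ k ih =>
      rw [pow_succ, Module.End.mul_apply, Module.End.mul_apply, ih, hA]

lemma sympF_shift {j n : ℕ} (hjn : j ≤ n) (u v : (Fin d ⊕ Fin d) → F) :
    sympF ((A ^ j) u) ((A ^ n) v) = sympF u ((A ^ (n - j)) v) := by
  have h1 : A ^ n = A ^ j * A ^ (n - j) := by
    rw [← pow_add, Nat.add_sub_cancel' hjn]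
  rw [h1, Module.End.mul_apply, sympF_pow A hA]

/-- Key adjoint identity:  ω(r(A)u, A^n v) = ω(u, r*(A) v) with n = deg r. -/
lemma sympF_adjoint (r : F[X]) (u v : (Fin d ⊕ Fin d) → F) :
    sympF ((Polynomial.aeval A r) u) ((A ^ r.natDegree) v)
      = sympF u ((Polynomial.aeval A r.reverse) v) := by
  have h1 : Polynomial.aeval A r
      = ∑ i ∈ Finset.range (r.natDegree + 1), r.coeff i • A ^ i :=
    Polynomial.aeval_eq_sum_range A
  have h2 : Polynomial.aeval A r.reverse
      = ∑ i ∈ Finset.range (r.natDegree + 1), r.reverse.coeff i • A ^ i :=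
    Polynomial.aeval_eq_sum_range' (lt_of_le_of_lt r.reverse_natDegree_le
      (Nat.lt_succ_self _)) A
  have L : sympF ((Polynomial.aeval A r) u) ((A ^ r.natDegree) v)
      = ∑ i ∈ Finset.range (r.natDegree + 1),
          r.coeff i * sympF ((A ^ i) u) ((A ^ r.natDegree) v) := by
    rw [h1, LinearMap.sum_apply, ← sympL_apply, map_sum, LinearMap.sum_apply]
    refine Finset.sum_congr rfl fun i _ => ?_
    rw [LinearMap.smul_apply, map_smul, LinearMap.smul_apply, smul_eq_mul, sympL_apply]
  have R : sympF u ((Polynomial.aeval A r.reverse) v)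
      = ∑ i ∈ Finset.range (r.natDegree + 1),
          r.reverse.coeff i * sympF u ((A ^ i) v) := by
    rw [h2, LinearMap.sum_apply, ← sympL_apply, map_sum]
    refine Finset.sum_congr rfl fun i _ => ?_
    rw [LinearMap.smul_apply, map_smul, smul_eq_mul, sympL_apply]
  rw [L, R, ← Finset.sum_range_reflect
    (fun i => r.reverse.coeff i * sympF u ((A ^ i) v)) (r.natDegree + 1)]
  refine Finset.sum_congr rfl fun i hi => ?_
  have hi' : i ≤ r.natDegree := Nat.lt_succ_iff.mp (Finset.mem_range.mp hi)
  have hsub : r.natDegree + 1 - 1 - i = r.natDegree - i := by omega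
  simp only [hsub]
  rw [Polynomial.coeff_reverse, Polynomial.revAt_le (Nat.sub_le _ _),
    Nat.sub_sub_self hi', sympF_shift A hA hi']

lemma sympF_ker_orth (r : F[X]) (u : (Fin d ⊕ Fin d) → F)
    (hu : u ∈ LinearMap.ker (Polynomial.aeval A r)) (v : (Fin d ⊕ Fin d) → F) :
    sympF u ((Polynomial.aeval A r.reverse) v) = 0 := by
  rw [← sympF_adjoint A hA r u v]
  rw [LinearMap.mem_ker] at hu
  rw [hu]
  simp [sympF]

end Aux

/-- If `p.coeff 0 ≠ 0` then `reverse (reverse p) = p`. -/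
lemma reverse_reverse_of_coeff_zero_ne_zero {F : Type*} [Field F] {p : F[X]}
    (h : p.coeff 0 ≠ 0) : p.reverse.reverse = p := by
  have htd : p.natTrailingDegree = 0 := by
    rw [Polynomial.natTrailingDegree_eq_zero]; exact Or.inr h
  have hdeg : p.reverse.natDegree = p.natDegree := by
    rw [Polynomial.reverse_natDegree, htd, Nat.sub_zero]
  ext i
  rw [Polynomial.coeff_reverse, hdeg, Polynomial.coeff_reverse, Polynomial.revAt_invol]

lemma coprime_of_ne_recip {F : Type*} [Field F] {p q : F[X]}
    (hp : p.Monic) (hq : q.Monic) (hpirr : Irreducible p) (hqirr : Irreducible q)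
    (hne : q ≠ Polynomial.C (p.coeff 0)⁻¹ * p.reverse) :
    IsCoprime q p.reverse := by
  by_cases hc : p.coeff 0 = 0
  · -- then p = X and reverse p = 1
    obtain ⟨c, hcp⟩ := Polynomial.X_dvd_iff.mpr hc
    have hcu : IsUnit c := (hpirr.isUnit_or_isUnit hcp).resolve_left Polynomial.not_isUnit_X
    obtain ⟨a, ha, rfl⟩ := Polynomial.isUnit_iff.mp hcu
    have ha1 : a = 1 := by
      have := hp.leadingCoeff
      rw [hcp] at this
      simpa using this
    rw [ha1] at hcp
    simp only [map_one, mul_one] at hcp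
    have : p.reverse = 1 := by
      rw [hcp]
      show Polynomial.reflect (Polynomial.X : F[X]).natDegree (Polynomial.X : F[X]) = 1
      rw [Polynomial.natDegree_X, Polynomial.reflect_one_X]
    rw [this]
    exact isCoprime_one_right
  · rw [hqirr.coprime_iff_not_dvd]
    intro hdvd
    obtain ⟨r, hr⟩ := hdvd
    -- constant coefficients
    have h0 : q.coeff 0 * r.coeff 0 = 1 := by
      have := congrArg (fun f => Polynomial.coeff f 0) hr
      simpa [Polynomial.mul_coeff_zero, Polynomial.coeff_zero_reverse, hp.leadingCoeff] using
        this.symm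
    have hq0 : q.coeff 0 ≠ 0 := left_ne_zero_of_mul_eq_one h0
    have hr0 : r.coeff 0 ≠ 0 := right_ne_zero_of_mul_eq_one h0
    have hfact : p = q.reverse * r.reverse := by
      conv_lhs => rw [← reverse_reverse_of_coeff_zero_ne_zero hc]
      rw [hr, Polynomial.reverse_mul_of_domain]
    rcases hpirr.isUnit_or_isUnit hfact with hu | hu
    · -- reverse q is a unit: impossible since deg q ≥ 1
      have h1 : q.reverse.natDegree = 0 := Polynomial.natDegree_eq_zero_of_isUnit hu
      have h2 : q.natTrailingDegree = 0 := by
        rw [Polynomial.natTrailingDegree_eq_zero]; exact Or.inr hq0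
      rw [Polynomial.reverse_natDegree, h2, Nat.sub_zero] at h1
      exact absurd h1 hqirr.natDegree_pos.ne'
    · -- reverse r is a unit, so r is a constant
      obtain ⟨a, ha, har⟩ := Polynomial.isUnit_iff.mp hu
      have hrc : r = Polynomial.C a := by
        have : r.reverse.reverse = r := reverse_reverse_of_coeff_zero_ne_zero hr0
        rw [← this, ← har]
        show Polynomial.reflect (Polynomial.C a).natDegree (Polynomial.C a) = Polynomial.C a
        rw [Polynomial.natDegree_C]
        simpa using Polynomial.reflect_C a 0
      -- identify the constant: a = p.coeff 0
      have hlead : p.reverse.leadingCoeff = p.coeff 0 := by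
        rw [Polynomial.reverse_leadingCoeff, Polynomial.trailingCoeff,
          show p.natTrailingDegree = 0 from by
            rw [Polynomial.natTrailingDegree_eq_zero]; exact Or.inr hc]
      have ha' : a = p.coeff 0 := by
        have := congrArg Polynomial.leadingCoeff hr
        rw [hlead, hrc, Polynomial.leadingCoeff_mul, hq.leadingCoeff,
          Polynomial.leadingCoeff_C, one_mul] at this
        exact this.symm
      apply hne
      rw [hr, hrc, ha', mul_comm q _, ← mul_assoc, ← Polynomial.C_mul,
        inv_mul_cancel₀ hc, Polynomial.C_1, one_mul]

theorem statement18 (d : ℕ) (hd : 1 ≤ d) (F : Type*) [Field F]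
    (A : ((Fin d ⊕ Fin d) → F) →ₗ[F] ((Fin d ⊕ Fin d) → F))
    -- `A` is symplectic
    (hA : ∀ u v : (Fin d ⊕ Fin d) → F, sympF (A u) (A v) = sympF u v)
    -- the characteristic polynomial of `A` has no repeated roots in an algebraic closure
    (hsqfree : Squarefree
      ((LinearMap.charpoly A).map (algebraMap F (AlgebraicClosure F))))
    (p q : Polynomial F)
    (hp : p.Monic) (hq : q.Monic) (hpirr : Irreducible p) (hqirr : Irreducible q)
    (hpdvd : p ∣ LinearMap.charpoly A) (hqdvd : q ∣ LinearMap.charpoly A)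
    -- `q` is not the normalized reciprocal polynomial `p* = p(0)⁻¹ X^{deg p} p(1/X)` of `p`
    (hne : q ≠ Polynomial.C (p.coeff 0)⁻¹ * p.reverse) :
    ∀ u ∈ LinearMap.ker (Polynomial.aeval A p),
      ∀ w ∈ LinearMap.ker (Polynomial.aeval A q),
        sympF u w = 0 := by
  intro u hu w hw
  obtain ⟨a, b, hab⟩ := coprime_of_ne_recip hp hq hpirr hqirr hne
  have hw' : w = (Polynomial.aeval A p.reverse) ((Polynomial.aeval A b) w) := by
    have h1 : (Polynomial.aeval A (a * q + b * p.reverse)) w = w := by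
      rw [hab]; simp
    rw [LinearMap.mem_ker] at hw
    rw [map_add, LinearMap.add_apply, map_mul, Module.End.mul_apply, hw, map_zero,
      zero_add, mul_comm b, map_mul, Module.End.mul_apply] at h1
    exact h1.symm
  rw [hw']
  exact sympF_ker_orth A hA p u hu _
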